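/- arXiv:math/0605275 — 7 statements merged into one kernel-verified Lean document; each statement's English description precedes it below -/
import Mathlib

section
/- The map j : Hom(A × B, C) → Hom(A, C^B) defined by j(α)(a) = { f : V(B) → V(C) | f(b) ∈ α(a,b) for all b } is a well-defined injective order-preserving map of posets. -/
/-- A graph: a symmetric relation on a vertex set, loops allowed. -/
structure LoopGraph (V : Type) : Type where
  Adj : V → V → Prop
  symm : ∀ u v : V, Adj u v → Adj v u

/-- A graph homomorphism: a vertex map preserving adjacency. -/
def LoopGraph.IsHom {V W : Type} (G : LoopGraph V) (H : LoopGraph W) (f : V → W) : Prop :=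
  ∀ u v : V, G.Adj u v → H.Adj (f u) (f v)

/-- The categorical product of graphs. -/
def LoopGraph.prod {V W : Type} (G : LoopGraph V) (H : LoopGraph W) : LoopGraph (V × W) :=
  ⟨fun p q => G.Adj p.1 q.1 ∧ H.Adj p.2 q.2,
   fun p q h => ⟨G.symm _ _ h.1, H.symm _ _ h.2⟩⟩

/-- The categorical exponential graph `H^G`: vertices are all functions `V(G) → V(H)`. -/
def LoopGraph.exp {V W : Type} (G : LoopGraph V) (H : LoopGraph W) : LoopGraph (V → W) :=
  ⟨fun f f' => ∀ v v' : V, G.Adj v v' → H.Adj (f v) (f' v'),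
   fun f f' h v v' hvv' => H.symm _ _ (h v' v (G.symm _ _ hvv'))⟩

/-- Multihomomorphisms between graphs. -/
def LoopGraph.IsMultiHom {V W : Type} (G : LoopGraph V) (H : LoopGraph W) (η : V → Set W) : Prop :=
  (∀ v, (η v).Nonempty) ∧
    ∀ x y : V, G.Adj x y → ∀ x' ∈ η x, ∀ y' ∈ η y, H.Adj x' y'

/-- The Hom poset, ordered by pointwise containment. -/
def MultiHom {V W : Type} (G : LoopGraph V) (H : LoopGraph W) : Type :=
  {η : V → Set W // LoopGraph.IsMultiHom G H η}

instance {V W : Type} (G : LoopGraph V) (H : LoopGraph W) : PartialOrder (MultiHom G H) :=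
  Subtype.partialOrder _

/-- The reflexive path `Iₙ` on `{0, …, n}`. -/
def pathGraph (n : ℕ) : LoopGraph (Fin (n + 1)) :=
  ⟨fun i j => (i : ℕ) = j ∨ (i : ℕ) + 1 = j ∨ (j : ℕ) + 1 = i,
   fun i j h => by tauto⟩

/-- ×-homotopy of vertex maps. -/
def Homotopic {V W : Type} (G : LoopGraph V) (H : LoopGraph W) (f g : V → W) : Prop :=
  ∃ n : ℕ, 1 ≤ n ∧ ∃ F : V × Fin (n + 1) → W,
    (G.prod (pathGraph n)).IsHom H F ∧
    (∀ v, F (v, 0) = f v) ∧ (∀ v, F (v, Fin.last n) = g v)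

/-- The singleton-valued multihomomorphism associated to a graph homomorphism. -/
def singletonMH {V W : Type} {G : LoopGraph V} {H : LoopGraph W} (f : V → W)
    (hf : G.IsHom H f) : MultiHom G H :=
  ⟨fun v => {f v},
   ⟨fun v => ⟨f v, rfl⟩, fun x y hxy x' hx' y' hy' => by
      simp only [Set.mem_singleton_iff] at hx' hy'
      subst hx'; subst hy'; exact hf _ _ hxy⟩⟩

/-- Disjoint union (coproduct) of graphs. -/
def LoopGraph.coprod {V W : Type} (G : LoopGraph V) (H : LoopGraph W) : LoopGraph (V ⊕ W) :=
  ⟨Sum.LiftRel G.Adj H.Adj,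
   fun u v h => by
    cases h with
    | inl h => exact Sum.LiftRel.inl (G.symm _ _ h)
    | inr h => exact Sum.LiftRel.inr (H.symm _ _ h)⟩

/-- The induced subgraph obtained by deleting the vertex `v`. -/
def LoopGraph.deleteVert {V : Type} (G : LoopGraph V) (v : V) : LoopGraph {x : V // x ≠ v} :=
  ⟨fun a b => G.Adj a.1 b.1, fun a b h => G.symm _ _ h⟩

/-- The cartesian (box) product of graphs. -/
def LoopGraph.box {V W : Type} (G : LoopGraph V) (H : LoopGraph W) : LoopGraph (V × W) :=
  ⟨fun p q => (G.Adj p.1 q.1 ∧ p.2 = q.2) ∨ (p.1 = q.1 ∧ H.Adj p.2 q.2),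
   fun p q h => by
    rcases h with ⟨h1, h2⟩ | ⟨h1, h2⟩
    · exact Or.inl ⟨G.symm _ _ h1, h2.symm⟩
    · exact Or.inr ⟨h1.symm, H.symm _ _ h2⟩⟩

/-- The cartesian exponential graph: vertices are the graph homomorphisms. -/
def LoopGraph.cartExp {V W : Type} (G : LoopGraph V) (H : LoopGraph W) :
    LoopGraph {f : V → W // G.IsHom H f} :=
  ⟨fun f f' => ∀ b, H.Adj (f.1 b) (f'.1 b), fun f f' h b => H.symm _ _ (h b)⟩

/-- A ×-homotopy equivalence of graphs. -/
def HtpyEquiv {V W : Type} (G : LoopGraph V) (H : LoopGraph W) (f : V → W) : Prop :=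
  G.IsHom H f ∧ ∃ g : W → V, H.IsHom G g ∧
    Homotopic G G (g ∘ f) id ∧ Homotopic H H (f ∘ g) id

/-- The one-point looped graph. -/
def oneGraph : LoopGraph Unit := ⟨fun _ _ => True, fun _ _ _ => trivial⟩

/-- the map `j : Hom(A × B, C) → Hom(A, C^B)` is a well-defined
injective order-preserving map. -/
theorem stmt_4 {VA VB VC : Type} (A : LoopGraph VA) (B : LoopGraph VB) (C : LoopGraph VC) :
    ∃ j : MultiHom (A.prod B) C → MultiHom A (LoopGraph.exp B C),
      (∀ (α : MultiHom (A.prod B) C) (a : VA),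
        (j α).1 a = {f : VB → VC | ∀ b : VB, f b ∈ α.1 (a, b)}) ∧
      Function.Injective j ∧ Monotone j := by
  classical
  refine ⟨fun α => ⟨fun a => {f : VB → VC | ∀ b : VB, f b ∈ α.1 (a, b)}, ?_, ?_⟩,
    fun α a => rfl, ?_, ?_⟩
  · intro a
    exact ⟨fun b => (α.2.1 (a, b)).choose, fun b => (α.2.1 (a, b)).choose_spec⟩
  · intro x y hxy f hf f' hf' b b' hbb'
    exact α.2.2 (x, b) (y, b') ⟨hxy, hbb'⟩ _ (hf b) _ (hf' b')
  · intro α α' h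
    apply Subtype.ext
    funext p
    have h' : ∀ a, {f : VB → VC | ∀ b : VB, f b ∈ α.1 (a, b)}
        = {f : VB → VC | ∀ b : VB, f b ∈ α'.1 (a, b)} := fun a =>
      congrFun (congrArg Subtype.val h) a
    obtain ⟨a, b⟩ := p
    ext x
    constructor
    · intro hx
      have key : (fun b' => if b' = b then x else (α.2.1 (a, b')).choose) ∈
          {f : VB → VC | ∀ b : VB, f b ∈ α.1 (a, b)} := by
        intro b'
        by_cases hb : b' = b
        · simp [hb, hx]
        · simp only [if_neg hb]; exact (α.2.1 (a, b')).choose_spec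
      rw [h'] at key
      have := key b
      simpa using this
    · intro hx
      have key : (fun b' => if b' = b then x else (α'.2.1 (a, b')).choose) ∈
          {f : VB → VC | ∀ b : VB, f b ∈ α'.1 (a, b)} := by
        intro b'
        by_cases hb : b' = b
        · simp [hb, hx]
        · simp only [if_neg hb]; exact (α'.2.1 (a, b')).choose_spec
      rw [← h'] at key
      have := key b
      simpa using this
  · intro α α' hle a f hf b
    exact hle (a, b) (hf b)
end

section
/- The image of the closure map c on Hom(A, C^B) given by c(γ)(a) = {g : V(B) → V(C) | g(b) ∈ {f(b) : f ∈ γ(a)}} equals the image of the inclusion j : Hom(A × B, C) → Hom(A, C^B) given by j(α)(a) = {f | f(b) ∈ α(a,b) for all b}. Consequently Hom(A × B, C) is isomorphic as a poset to the image of c. -/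
section Aux

variable {VA VB VC : Type} (A : LoopGraph VA) (B : LoopGraph VB) (C : LoopGraph VC)

noncomputable def jMH (α : MultiHom (A.prod B) C) : MultiHom A (LoopGraph.exp B C) :=
  ⟨fun a => {f | ∀ b, f b ∈ α.1 (a, b)},
   ⟨fun a => ⟨fun b => (α.2.1 (a, b)).choose, fun b => (α.2.1 (a, b)).choose_spec⟩,
    fun x y hxy f hf f' hf' b b' hbb' =>
      α.2.2 (x, b) (y, b') ⟨hxy, hbb'⟩ _ (hf b) _ (hf' b')⟩⟩

noncomputable def cMH (γ : MultiHom A (LoopGraph.exp B C)) : MultiHom A (LoopGraph.exp B C) :=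
  ⟨fun a => {g | ∀ b, ∃ f ∈ γ.1 a, f b = g b},
   ⟨fun a => by
      obtain ⟨f, hf⟩ := γ.2.1 a
      exact ⟨f, fun b => ⟨f, hf, rfl⟩⟩,
    fun x y hxy g hg g' hg' b b' hbb' => by
      obtain ⟨f, hf, hfb⟩ := hg b
      obtain ⟨f', hf', hf'b⟩ := hg' b'
      rw [← hfb, ← hf'b]
      exact γ.2.2 x y hxy f hf f' hf' b b' hbb'⟩⟩

open Classical in
lemma mem_jMH_iff (α : MultiHom (A.prod B) C) (a : VA) (b : VB) (x : VC) :
    x ∈ α.1 (a, b) ↔ ∃ f ∈ (jMH A B C α).1 a, f b = x := by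
  constructor
  · intro hx
    refine ⟨fun b' => if h : b' = b then x else (α.2.1 (a, b')).choose, ?_, ?_⟩
    · intro b'
      by_cases h : b' = b
      · subst h; simpa using hx
      · simpa [h] using (α.2.1 (a, b')).choose_spec
    · simp
  · rintro ⟨f, hf, rfl⟩
    exact hf b

lemma jMH_le_iff (α α' : MultiHom (A.prod B) C) :
    jMH A B C α ≤ jMH A B C α' ↔ α ≤ α' := by
  constructor
  · intro h p x hx
    obtain ⟨f, hf, hfb⟩ := (mem_jMH_iff A B C α p.1 p.2 x).1 hx
    exact hfb ▸ (mem_jMH_iff A B C α' p.1 p.2 (f p.2)).2 ⟨f, h p.1 hf, rfl⟩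
  · intro h a f hf b
    exact h (a, b) (hf b)

lemma jMH_injective : Function.Injective (jMH A B C) := fun α α' h => by
  apply le_antisymm
  · exact (jMH_le_iff A B C α α').1 h.le
  · exact (jMH_le_iff A B C α' α).1 h.ge

lemma cMH_jMH (α : MultiHom (A.prod B) C) : cMH A B C (jMH A B C α) = jMH A B C α := by
  apply Subtype.ext
  funext a
  ext g
  constructor
  · intro hg b
    obtain ⟨f, hf, hfb⟩ := hg b
    exact hfb ▸ hf b
  · intro hg b
    exact ⟨g, hg, rfl⟩

noncomputable def alphaOf (γ : MultiHom A (LoopGraph.exp B C)) : MultiHom (A.prod B) C :=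
  ⟨fun p => {x | ∃ f ∈ γ.1 p.1, f p.2 = x},
   ⟨fun p => by
      obtain ⟨f, hf⟩ := γ.2.1 p.1
      exact ⟨f p.2, f, hf, rfl⟩,
    fun p q hpq x hx y hy => by
      obtain ⟨f, hf, rfl⟩ := hx
      obtain ⟨f', hf', rfl⟩ := hy
      exact γ.2.2 p.1 q.1 hpq.1 f hf f' hf' p.2 q.2 hpq.2⟩⟩

lemma cMH_eq_jMH_alphaOf (γ : MultiHom A (LoopGraph.exp B C)) :
    cMH A B C γ = jMH A B C (alphaOf A B C γ) := by
  apply Subtype.ext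
  funext a
  ext g
  exact ⟨fun hg b => hg b, fun hg b => hg b⟩

lemma range_cMH_eq : Set.range (cMH A B C) = Set.range (jMH A B C) := by
  ext γ
  constructor
  · rintro ⟨γ', rfl⟩
    exact ⟨alphaOf A B C γ', (cMH_eq_jMH_alphaOf A B C γ').symm⟩
  · rintro ⟨α, rfl⟩
    exact ⟨jMH A B C α, cMH_jMH A B C α⟩

noncomputable def jIso : MultiHom (A.prod B) C ≃o ↥(Set.range (jMH A B C)) :=
  { toEquiv := Equiv.ofInjective _ (jMH_injective A B C)
    map_rel_iff' := by
      intro α α'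
      rw [← Subtype.coe_le_coe, Equiv.ofInjective_apply, Equiv.ofInjective_apply]
      exact jMH_le_iff A B C α α' }

end Aux

/-- the image of the closure map `c` on `Hom(A, C^B)` equals the image
of the inclusion `j : Hom(A × B, C) → Hom(A, C^B)`; consequently `Hom(A × B, C)` is
isomorphic as a poset to the image of `c`. -/
theorem stmt_6 {VA VB VC : Type} (A : LoopGraph VA) (B : LoopGraph VB) (C : LoopGraph VC) :
    ∃ (j : MultiHom (A.prod B) C → MultiHom A (LoopGraph.exp B C))
      (c : MultiHom A (LoopGraph.exp B C) → MultiHom A (LoopGraph.exp B C)),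
      (∀ (α : MultiHom (A.prod B) C) (a : VA),
        (j α).1 a = {f : VB → VC | ∀ b : VB, f b ∈ α.1 (a, b)}) ∧
      (∀ (γ : MultiHom A (LoopGraph.exp B C)) (a : VA),
        (c γ).1 a = {g : VB → VC | ∀ b : VB, ∃ f ∈ γ.1 a, f b = g b}) ∧
      Set.range c = Set.range j ∧
      Nonempty (MultiHom (A.prod B) C ≃o ↥(Set.range c)) := by
  refine ⟨jMH A B C, cMH A B C, fun α a => rfl, fun γ a => rfl, range_cMH_eq A B C, ?_⟩
  rw [range_cMH_eq A B C]
  exact ⟨jIso A B C⟩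
end

section
/- For γ ∈ Hom(T, G × H), define c(γ)(v) = A_v × B_v where A_v ⊆ V(G) and B_v ⊆ V(H) are the projections of γ(v) to each factor. Then c is a closure operator on Hom(T, G × H) (order-preserving, c(γ) ≥ γ, and c∘c = c), and its image equals the image of the inclusion i(α,β)(v) = α(v) × β(v) of Hom(T,G) × Hom(T,H). -/
/-- projecting each `γ(v)` to the two factors gives a closure operator on
`Hom(T, G × H)` whose image is the image of the inclusion of `Hom(T,G) × Hom(T,H)`. -/
theorem stmt_8 {VT VG VH : Type} (T : LoopGraph VT) (G : LoopGraph VG) (H : LoopGraph VH) :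
    ∃ c : MultiHom T (G.prod H) → MultiHom T (G.prod H),
      (∀ (γ : MultiHom T (G.prod H)) (v : VT),
        (c γ).1 v = (Prod.fst '' γ.1 v) ×ˢ (Prod.snd '' γ.1 v)) ∧
      Monotone c ∧ (∀ γ, γ ≤ c γ) ∧ (∀ γ, c (c γ) = c γ) ∧
      ∃ i : MultiHom T G × MultiHom T H → MultiHom T (G.prod H),
        (∀ (p : MultiHom T G × MultiHom T H) (v : VT),
          (i p).1 v = (p.1.1 v) ×ˢ (p.2.1 v)) ∧
        Set.range c = Set.range i := by

  classical
  -- the closure map on raw functions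
  set cf : (VT → Set (VG × VH)) → (VT → Set (VG × VH)) :=
    fun η v => (Prod.fst '' η v) ×ˢ (Prod.snd '' η v) with hcf
  have hmh : ∀ γ : MultiHom T (G.prod H), LoopGraph.IsMultiHom T (G.prod H) (cf γ.1) := by
    intro γ
    obtain ⟨hne, hadj⟩ := γ.2
    constructor
    · intro v
      obtain ⟨p, hp⟩ := hne v
      exact ⟨(p.1, p.2), ⟨p, hp, rfl⟩, ⟨p, hp, rfl⟩⟩
    · rintro x y hxy x' ⟨⟨p, hp, hp1⟩, ⟨q, hq, hq1⟩⟩ y' ⟨⟨p', hp', hp1'⟩, ⟨q', hq', hq1'⟩⟩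
      constructor
      · have := hadj x y hxy p hp p' hp'
        rw [← hp1, ← hp1']; exact this.1
      · have := hadj x y hxy q hq q' hq'
        rw [← hq1, ← hq1']; exact this.2
  refine ⟨fun γ => ⟨cf γ.1, hmh γ⟩, fun γ v => rfl, ?_, ?_, ?_, ?_⟩
  · -- monotone
    intro γ δ hle v
    rintro ⟨a, b⟩ ⟨⟨p, hp, hp1⟩, ⟨q, hq, hq1⟩⟩
    exact ⟨⟨p, hle v hp, hp1⟩, ⟨q, hle v hq, hq1⟩⟩
  · -- extensive
    intro γ v p hp
    exact ⟨⟨p, hp, rfl⟩, ⟨p, hp, rfl⟩⟩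
  · -- idempotent
    intro γ
    apply Subtype.ext
    funext v
    apply Set.Subset.antisymm
    · rintro ⟨a, b⟩ ⟨⟨p, ⟨⟨r, hr, hr1⟩, ⟨s, hs, hs1⟩⟩, hp1⟩, ⟨q, ⟨⟨r', hr', hr1'⟩, ⟨s', hs', hs1'⟩⟩, hq1⟩⟩
      refine ⟨⟨r, hr, ?_⟩, ⟨s', hs', ?_⟩⟩
      · rw [hr1, hp1]
      · rw [hs1', hq1]
    · rintro ⟨a, b⟩ ⟨⟨p, hp, hp1⟩, ⟨q, hq, hq1⟩⟩
      exact ⟨⟨p, ⟨⟨p, hp, rfl⟩, ⟨p, hp, rfl⟩⟩, hp1⟩, ⟨q, ⟨⟨q, hq, rfl⟩, ⟨q, hq, rfl⟩⟩, hq1⟩⟩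
  · -- the inclusion
    have hi : ∀ p : MultiHom T G × MultiHom T H,
        LoopGraph.IsMultiHom T (G.prod H) (fun v => (p.1.1 v) ×ˢ (p.2.1 v)) := by
      rintro ⟨α, β⟩
      constructor
      · intro v
        obtain ⟨a, ha⟩ := α.2.1 v
        obtain ⟨b, hb⟩ := β.2.1 v
        exact ⟨(a, b), ha, hb⟩
      · rintro x y hxy ⟨a, b⟩ ⟨ha, hb⟩ ⟨a', b'⟩ ⟨ha', hb'⟩
        exact ⟨α.2.2 x y hxy a ha a' ha', β.2.2 x y hxy b hb b' hb'⟩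
    refine ⟨fun p => ⟨fun v => (p.1.1 v) ×ˢ (p.2.1 v), hi p⟩, fun p v => rfl, ?_⟩
    apply Set.Subset.antisymm
    · rintro _ ⟨γ, rfl⟩
      -- build the projection multihoms
      have hα : LoopGraph.IsMultiHom T G (fun v => Prod.fst '' γ.1 v) := by
        constructor
        · intro v; obtain ⟨p, hp⟩ := γ.2.1 v; exact ⟨p.1, p, hp, rfl⟩
        · rintro x y hxy a ⟨p, hp, rfl⟩ a' ⟨p', hp', rfl⟩
          exact (γ.2.2 x y hxy p hp p' hp').1
      have hβ : LoopGraph.IsMultiHom T H (fun v => Prod.snd '' γ.1 v) := by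
        constructor
        · intro v; obtain ⟨p, hp⟩ := γ.2.1 v; exact ⟨p.2, p, hp, rfl⟩
        · rintro x y hxy b ⟨p, hp, rfl⟩ b' ⟨p', hp', rfl⟩
          exact (γ.2.2 x y hxy p hp p' hp').2
      exact ⟨(⟨_, hα⟩, ⟨_, hβ⟩), rfl⟩
    · rintro _ ⟨⟨α, β⟩, rfl⟩
      refine ⟨⟨fun v => (α.1 v) ×ˢ (β.1 v), hi (α, β)⟩, ?_⟩
      apply Subtype.ext
      funext v
      apply Set.Subset.antisymm
      · rintro ⟨a, b⟩ ⟨⟨p, ⟨hp1, hp2⟩, hpa⟩, ⟨q, ⟨hq1, hq2⟩, hqb⟩⟩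
        exact ⟨hpa ▸ hp1, hqb ▸ hq2⟩
      · rintro ⟨a, b⟩ ⟨ha, hb⟩
        obtain ⟨a0, ha0⟩ := α.2.1 v
        obtain ⟨b0, hb0⟩ := β.2.1 v
        exact ⟨⟨(a, b0), ⟨ha, hb0⟩, rfl⟩, ⟨(a0, b), ⟨ha0, hb⟩, rfl⟩⟩
end

section
/- Graph homomorphisms f, g : G → H are ×-homotopic (via some G × Iₙ → H) if and only if there exists a graph homomorphism F : Iₙ → H^G from the reflexive path Iₙ to the exponential graph H^G with F(0) = f and F(n) = g. -/
/-- ×-homotopy via `G × Iₙ → H` is equivalent to a path `Iₙ → H^G`. -/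
theorem stmt_11 {V W : Type} (G : LoopGraph V) (H : LoopGraph W) (f g : V → W)
    (hf : G.IsHom H f) (hg : G.IsHom H g) :
    Homotopic G H f g ↔
      ∃ n : ℕ, 1 ≤ n ∧ ∃ F : Fin (n + 1) → (V → W),
        (pathGraph n).IsHom (LoopGraph.exp G H) F ∧ F 0 = f ∧ F (Fin.last n) = g := by
  constructor
  · rintro ⟨n, hn, F, hF, h0, hl⟩
    exact ⟨n, hn, fun i v => F (v, i),
      fun i j hij v v' hvv' => hF (v, i) (v', j) ⟨hvv', hij⟩,
      funext h0, funext hl⟩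
  · rintro ⟨n, hn, F, hF, h0, hl⟩
    exact ⟨n, hn, fun p => F p.2 p.1,
      fun p q hpq => hF p.2 q.2 hpq.2 p.1 q.1 hpq.1,
      fun v => congrFun h0 v, fun v => congrFun hl v⟩
end

section
/- If f, g : G → H are graph homomorphisms that are 1-homotopic (i.e., there is a graph homomorphism F : G × I₁ → H with F(·,0)=f, F(·,1)=g), then the function ξ : V(G) → nonempty subsets of V(H) given by ξ(v) = {f(v), g(v)} is an element of the poset Hom(G,H), and f ≤ ξ and g ≤ ξ where f, g are viewed as singleton-valued elements of Hom(G,H). -/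
/-- a 1-homotopy from `f` to `g` yields the multihomomorphism
`ξ(v) = {f(v), g(v)}`, above both `f` and `g`. -/
theorem stmt_12 {V W : Type} (G : LoopGraph V) (H : LoopGraph W) (f g : V → W)
    (hf : G.IsHom H f) (hg : G.IsHom H g)
    (F : V × Fin 2 → W) (hF : (G.prod (pathGraph 1)).IsHom H F)
    (hF0 : ∀ v, F (v, 0) = f v) (hF1 : ∀ v, F (v, 1) = g v) :
    G.IsMultiHom H (fun v => {f v, g v}) ∧
      (∀ v, ({f v} : Set W) ⊆ {f v, g v}) ∧
      (∀ v, ({g v} : Set W) ⊆ {f v, g v}) := by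
  have key : ∀ (x y : V), G.Adj x y → ∀ i j : Fin 2,
      (pathGraph 1).Adj i j → H.Adj (F (x, i)) (F (y, j)) := by
    intro x y hxy i j hij
    exact hF (x, i) (y, j) ⟨hxy, hij⟩
  have adj01 : (pathGraph 1).Adj 0 1 := Or.inr (Or.inl rfl)
  have adj10 : (pathGraph 1).Adj 1 0 := Or.inr (Or.inr rfl)
  have adj00 : (pathGraph 1).Adj 0 0 := Or.inl rfl
  have adj11 : (pathGraph 1).Adj 1 1 := Or.inl rfl
  refine ⟨⟨fun v => ⟨f v, Or.inl rfl⟩, ?_⟩, fun v => by intro w hw; exact Or.inl hw,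
    fun v => by intro w hw; exact Or.inr hw⟩
  intro x y hxy x' hx' y' hy'
  rcases hx' with hx' | hx' <;> rcases hy' with hy' | hy' <;> subst hx' <;> subst hy'
  · exact hf _ _ hxy
  · have := key x y hxy 0 1 adj01; rwa [hF0, hF1] at this
  · have := key x y hxy 1 0 adj10; rwa [hF0, hF1] at this
  · exact hg _ _ hxy
end

section
/- If G and H are stiff graphs and f : G → H is a ×-homotopy equivalence (i.e., there is g : H → G with g∘f ×-homotopic to id_G and f∘g ×-homotopic to id_H), then f is a graph isomorphism. -/
lemma htpy_id_eq {V : Type} (G : LoopGraph V)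
    (hs : ∀ u v : V, u ≠ v → ¬ (∀ w, G.Adj v w → G.Adj u w))
    (h : V → V) (hh : Homotopic G G h id) : h = id := by
  obtain ⟨n, hn, F, hF, h0, hl⟩ := hh
  have key : ∀ k : ℕ, ∀ v, F (v, ⟨n - k, by omega⟩) = v := by
    intro k
    induction k with
    | zero =>
      intro v
      have : (⟨n - 0, by omega⟩ : Fin (n + 1)) = Fin.last n := by
        ext; simp [Fin.last]
      rw [this]; exact hl v
    | succ k ih =>
      intro v
      by_cases hk : n ≤ k
      · have hidx : (⟨n - (k+1), by omega⟩ : Fin (n+1)) = ⟨n - k, by omega⟩ := by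
          ext; simp; omega
        rw [hidx]; exact ih v
      · push_neg at hk
        by_contra hne
        apply hs (F (v, ⟨n - (k+1), by omega⟩)) v hne
        intro w hw
        have hadj : (G.prod (pathGraph n)).Adj (v, ⟨n - (k+1), by omega⟩)
            (w, ⟨n - k, by omega⟩) :=
          ⟨hw, Or.inr (Or.inl (by simp; omega))⟩
        have := hF _ _ hadj
        rwa [ih w] at this
  funext v
  have h1 := key n v
  have h2 : (⟨n - n, by omega⟩ : Fin (n+1)) = 0 := by ext; simp
  rw [h2] at h1
  rw [← h0 v, h1]; rfl

/-- a ×-homotopy equivalence between stiff graphs is an isomorphism. -/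
theorem stmt_15 {V W : Type} (G : LoopGraph V) (H : LoopGraph W)
    (hGstiff : ∀ u v : V, u ≠ v → ¬ (∀ w, G.Adj v w → G.Adj u w))
    (hHstiff : ∀ u v : W, u ≠ v → ¬ (∀ w, H.Adj v w → H.Adj u w))
    (f : V → W) (hf : G.IsHom H f)
    (g : W → V) (hg : H.IsHom G g)
    (hgf : Homotopic G G (g ∘ f) id) (hfg : Homotopic H H (f ∘ g) id) :
    Function.Bijective f ∧ ∀ u v : V, G.Adj u v ↔ H.Adj (f u) (f v) := by
  have hgf' : g ∘ f = id := htpy_id_eq G hGstiff _ hgf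
  have hfg' : f ∘ g = id := htpy_id_eq H hHstiff _ hfg
  refine ⟨⟨Function.LeftInverse.injective (g := g) (congrFun hgf'),
    Function.RightInverse.surjective (g := g) (congrFun hfg')⟩, fun u v => ?_⟩
  constructor
  · exact hf u v
  · intro hadj
    have h3 := hg _ _ hadj
    have h1 : g (f u) = u := congrFun hgf' u
    have h2 : g (f v) = v := congrFun hgf' v
    rwa [h1, h2] at h3
end

section
/- A finite graph G with at least one looped vertex such that the poset Hom(G,G) is connected is ×-homotopy equivalent to the one-point looped graph 1: the unique map f : G → 1 has a homotopy inverse g : 1 → G, namely the map sending the point to any looped vertex of G. -/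
/-- Two selections from a single multihomomorphism are ×-homotopic. -/
theorem homotopic_of_mem {V W : Type} (G : LoopGraph V) (H : LoopGraph W) (η : MultiHom G H)
    (f g : V → W) (hf : ∀ x, f x ∈ η.1 x) (hg : ∀ x, g x ∈ η.1 x) :
    Homotopic G H f g := by
  refine ⟨1, le_refl 1, fun p => if p.2 = 0 then f p.1 else g p.1, ?_, ?_, ?_⟩
  · rintro ⟨x, i⟩ ⟨y, j⟩ ⟨hxy, -⟩
    dsimp only
    split <;> split <;> exact η.2.2 x y hxy _ (by first | exact hf x | exact hg x)
      _ (by first | exact hf y | exact hg y)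
  · intro x; simp
  · intro x; simp [Fin.ext_iff]

theorem pathGraph_adj_mk {n a b : ℕ} (ha : a < n + 1) (hb : b < n + 1)
    (h : a = b ∨ a + 1 = b ∨ b + 1 = a) : (pathGraph n).Adj ⟨a, ha⟩ ⟨b, hb⟩ := h

theorem LoopGraph.adj_congr {W : Type} (H : LoopGraph W) {a b a' b' : W}
    (h1 : a = a') (h2 : b = b') (h : H.Adj a b) : H.Adj a' b' := by
  rw [← h1, ← h2]; exact h

theorem homotopic_trans {V W : Type} (G : LoopGraph V) (H : LoopGraph W) {f g h : V → W}
    (h1 : Homotopic G H f g) (h2 : Homotopic G H g h) : Homotopic G H f h := by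
  obtain ⟨n, hn, F, hF, hF0, hFn⟩ := h1
  obtain ⟨m, hm, F', hF', hF0', hFm'⟩ := h2
  refine ⟨n + m, le_trans hn (Nat.le_add_right n m),
    fun p => if hc : p.2.val ≤ n then F (p.1, ⟨p.2.val, by omega⟩)
             else F' (p.1, ⟨p.2.val - n, by have := p.2.isLt; omega⟩), ?_, ?_, ?_⟩
  · rintro ⟨x, i⟩ ⟨y, j⟩ ⟨hxy, hij⟩
    have hij' : (i : ℕ) = j ∨ (i : ℕ) + 1 = j ∨ (j : ℕ) + 1 = i := hij
    have hi := i.isLt; have hj := j.isLt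
    dsimp only
    by_cases hin : (i : ℕ) ≤ n <;> by_cases hjn : (j : ℕ) ≤ n
    · rw [dif_pos hin, dif_pos hjn]
      exact hF _ _ ⟨hxy, pathGraph_adj_mk _ _ (by omega)⟩
    · -- i ≤ n < j, so i = n, j = n + 1
      rw [dif_pos hin, dif_neg hjn]
      have hi' : (i : ℕ) = n := by omega
      have key : H.Adj (F' (x, ⟨0, by omega⟩)) (F' (y, ⟨(j : ℕ) - n, by have := j.isLt; omega⟩)) :=
        hF' _ _ ⟨hxy, pathGraph_adj_mk _ _ (by omega)⟩
      refine H.adj_congr ?_ rfl key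
      have e0 : (⟨0, by omega⟩ : Fin (m + 1)) = 0 := Fin.ext (by simp)
      have e1 : (⟨(i : ℕ), by omega⟩ : Fin (n + 1)) = Fin.last n :=
        Fin.ext (by simpa [Fin.last] using hi')
      rw [e0, e1, hFn, hF0']
    · -- j ≤ n < i
      rw [dif_neg hin, dif_pos hjn]
      have hj' : (j : ℕ) = n := by omega
      have key : H.Adj (F' (x, ⟨(i : ℕ) - n, by have := i.isLt; omega⟩)) (F' (y, ⟨0, by omega⟩)) :=
        hF' _ _ ⟨hxy, pathGraph_adj_mk _ _ (by omega)⟩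
      refine H.adj_congr rfl ?_ key
      have e0 : (⟨0, by omega⟩ : Fin (m + 1)) = 0 := Fin.ext (by simp)
      have e1 : (⟨(j : ℕ), by omega⟩ : Fin (n + 1)) = Fin.last n :=
        Fin.ext (by simpa [Fin.last] using hj')
      rw [e0, e1, hFn, hF0']
    · rw [dif_neg hin, dif_neg hjn]
      exact hF' _ _ ⟨hxy, pathGraph_adj_mk _ _ (by omega)⟩
  · intro x
    dsimp only
    have h0 : ((0 : Fin (n + m + 1)) : ℕ) ≤ n := by simp
    rw [dif_pos h0]
    have e1 : (⟨((0 : Fin (n + m + 1)) : ℕ), by omega⟩ : Fin (n + 1)) = 0 :=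
      Fin.ext (by simp)
    rw [e1]; exact hF0 x
  · intro x
    dsimp only
    have hlast : ¬ ((Fin.last (n + m) : ℕ) ≤ n) := by
      simp only [Fin.val_last]; omega
    rw [dif_neg hlast]
    have e1 : (⟨(Fin.last (n + m) : ℕ) - n, by have := (Fin.last (n + m)).isLt; omega⟩ :
        Fin (m + 1)) = Fin.last m := Fin.ext (by simp [Fin.last])
    rw [e1]; exact hFm' x

/-- A zigzag chain in the Hom poset yields a ×-homotopy between selections. -/
theorem chain_homotopic {V W : Type} (G : LoopGraph V) (H : LoopGraph W)
    {η η' : MultiHom G H}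
    (hc : Relation.ReflTransGen (fun x y : MultiHom G H => x ≤ y ∨ y ≤ x) η η')
    (f g : V → W) (hf : ∀ x, f x ∈ η.1 x) (hg : ∀ x, g x ∈ η'.1 x) :
    Homotopic G H f g := by
  induction hc generalizing g with
  | refl => exact homotopic_of_mem G H η f g hf hg
  | @tail c c' hbc hstep ih =>
    have hsel : ∀ x, ((c.2.1 x).choose) ∈ c.1 x := fun x => (c.2.1 x).choose_spec
    refine homotopic_trans G H (ih _ hsel) ?_
    rcases hstep with hle | hle
    · exact homotopic_of_mem G H c' _ g (fun x => hle x (hsel x)) hg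
    · exact homotopic_of_mem G H c _ g hsel (fun x => hle x (hg x))

/-- a finite graph with a looped vertex and connected `Hom(G,G)` is
×-homotopy equivalent to the one-point looped graph, via any looped vertex. -/
theorem stmt_18 {V : Type} [Fintype V] (G : LoopGraph V)
    (hconn : ∀ a b : MultiHom G G,
      Relation.ReflTransGen (fun x y : MultiHom G G => x ≤ y ∨ y ≤ x) a b)
    (v : V) (hv : G.Adj v v) :
    G.IsHom oneGraph (fun _ => ()) ∧
    oneGraph.IsHom G (fun _ => v) ∧
    Homotopic oneGraph oneGraph ((fun _ : V => ()) ∘ (fun _ : Unit => v)) id ∧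
    Homotopic G G ((fun _ : Unit => v) ∘ (fun _ : V => ())) id := by
  refine ⟨fun _ _ _ => trivial, fun _ _ _ => hv, ?_, ?_⟩
  · exact ⟨1, le_refl 1, fun _ => (), fun _ _ _ => trivial, fun _ => rfl, fun _ => rfl⟩
  · have a : MultiHom G G := singletonMH (fun _ => v) (fun _ _ _ => hv)
    have b : MultiHom G G := singletonMH (id : V → V) (fun _ _ h => h)
    exact chain_homotopic G G
      (hconn (singletonMH (fun _ => v) (fun _ _ _ => hv)) (singletonMH id (fun _ _ h => h)))
      (fun _ => v) id (fun x => rfl) (fun x => rfl)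
end
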